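/- Let A be a type and let α, β, γ, δ be setoids on A forming a pairwise permuting diamond M3 with bottom ⊥. Form the duplication A(γ) over γ. Then in Setoid (A(γ)): β₀ ∘ α₁ = β₀ ⊔ α₁ = δ₀. -/

import Mathlib

/-! Common setup: the lattice `Setoid A` of equivalence relations on `A`,
the duplication `Dup β = {p : A × A // β p.1 p.2}`, the lifted setoids
`lift0 β θ = θ₀`, `lift1 β θ = θ₁`, the projection kernels `ker0 β = η₀`,
`ker1 β = η₁`, and relational composition `rc`. -/

variable {A : Type*}

/-- The duplication `A(β)`. -/
def Dup (β : Setoid A) : Type _ := {p : A × A // β.r p.1 p.2}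

/-- `θ₀`: relate two elements of `A(β)` iff `θ` relates their first coordinates. -/
def lift0 (β θ : Setoid A) : Setoid (Dup β) :=
  ⟨fun x y => θ.r x.1.1 y.1.1,
   ⟨fun _ => θ.refl' _, fun h => θ.symm' h, fun h h' => θ.trans' h h'⟩⟩

/-- `θ₁`: relate two elements of `A(β)` iff `θ` relates their second coordinates. -/
def lift1 (β θ : Setoid A) : Setoid (Dup β) :=
  ⟨fun x y => θ.r x.1.2 y.1.2,
   ⟨fun _ => θ.refl' _, fun h => θ.symm' h, fun h h' => θ.trans' h h'⟩⟩

/-- `η₀`: kernel of the first projection. -/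
def ker0 (β : Setoid A) : Setoid (Dup β) :=
  ⟨fun x y => x.1.1 = y.1.1, ⟨fun _ => rfl, Eq.symm, Eq.trans⟩⟩

/-- `η₁`: kernel of the second projection. -/
def ker1 (β : Setoid A) : Setoid (Dup β) :=
  ⟨fun x y => x.1.2 = y.1.2, ⟨fun _ => rfl, Eq.symm, Eq.trans⟩⟩

/-- Relational composition. -/
def rc {B : Type*} (r s : B → B → Prop) : B → B → Prop :=
  fun a b => ∃ c, r a c ∧ s c b

/-- `α, β, γ, δ` form a diamond `M₃` with bottom `⊥` in `Setoid A`. -/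
def IsM3 (α β γ δ : Setoid A) : Prop :=
  α ⊓ β = ⊥ ∧ α ⊓ γ = ⊥ ∧ β ⊓ γ = ⊥ ∧
  α ⊔ β = δ ∧ α ⊔ γ = δ ∧ β ⊔ γ = δ ∧
  α ≠ β ∧ α ≠ γ ∧ β ≠ γ ∧
  α ≠ ⊥ ∧ β ≠ ⊥ ∧ γ ≠ ⊥ ∧ α ≠ δ ∧ β ≠ δ ∧ γ ≠ δ

/-- The diamond is pairwise permuting. -/
def M3Permutes (α β γ : Setoid A) : Prop :=
  rc α.r β.r = rc β.r α.r ∧ rc α.r γ.r = rc γ.r α.r ∧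
  rc β.r γ.r = rc γ.r β.r

/-- If two setoids permute, their relational composite is an equivalence. -/
lemma comp_setoid (r s : Setoid A) (hp : rc r.r s.r = rc s.r r.r) :
    Equivalence (rc r.r s.r) := by
  constructor
  · intro a; exact ⟨a, r.refl' a, s.refl' a⟩
  · rintro a b ⟨c, hac, hcb⟩
    have : rc s.r r.r b a := ⟨c, s.symm' hcb, r.symm' hac⟩
    rw [← hp] at this; exact this
  · rintro a b c ⟨d, had, hdb⟩ ⟨e, hbe, hec⟩
    have : rc s.r r.r d e := ⟨b, hdb, hbe⟩
    rw [← hp] at this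
    obtain ⟨f, hdf, hfe⟩ := this
    exact ⟨f, r.trans' had hdf, s.trans' hfe hec⟩

lemma sup_rel_of_permute (r s : Setoid A) (hp : rc r.r s.r = rc s.r r.r) :
    (r ⊔ s).r = rc r.r s.r := by
  apply le_antisymm
  · show (r ⊔ s) ≤ ⟨rc r.r s.r, comp_setoid r s hp⟩
    apply sup_le
    · intro a b hab; exact ⟨b, hab, s.refl' b⟩
    · intro a b hab; exact ⟨a, r.refl' a, hab⟩
  · rintro a b ⟨c, hac, hcb⟩
    exact (r ⊔ s).trans' (le_sup_left (b := s) hac) (le_sup_right (a := r) hcb)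

/-- Lemma 4.2(4). -/
theorem permute_lemma_4 (α β γ δ : Setoid A) (h : IsM3 α β γ δ)
    (hperm : M3Permutes α β γ) :
    rc (lift0 γ β).r (lift1 γ α).r = (lift0 γ β ⊔ lift1 γ α).r ∧
    lift0 γ β ⊔ lift1 γ α = lift0 γ δ := by
  obtain ⟨-, -, -, hab, hag, hbg, -⟩ := h
  obtain ⟨-, -, hbgp⟩ := hperm
  have haδ : α ≤ δ := hab ▸ le_sup_left
  have hbδ : β ≤ δ := hab ▸ le_sup_right
  have hgδ : γ ≤ δ := hag ▸ le_sup_right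
  have hδbg : δ.r = rc β.r γ.r := by
    rw [← hbg]; exact sup_rel_of_permute β γ hbgp
  -- key: the composite relation equals δ₀
  have key : rc (lift0 γ β).r (lift1 γ α).r = (lift0 γ δ).r := by
    funext x z
    apply propext
    constructor
    · rintro ⟨c, hxc, hcz⟩
      -- β x.1.1 c.1.1, γ c.1.1 c.1.2, α c.1.2 z.1.2, γ z.1.1 z.1.2
      exact δ.trans' (δ.trans' (δ.trans' (hbδ hxc) (hgδ c.2)) (haδ hcz))
        (δ.symm' (hgδ z.2))
    · intro hxz
      have h1 : δ.r x.1.1 z.1.2 := δ.trans' hxz (hgδ z.2)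
      rw [hδbg] at h1
      obtain ⟨c, hxc, hcz⟩ := h1
      exact ⟨⟨(c, z.1.2), hcz⟩, hxc, α.refl' _⟩
  have hsup : lift0 γ β ⊔ lift1 γ α = lift0 γ δ := by
    apply le_antisymm
    · apply sup_le
      · intro x y hxy; exact hbδ hxy
      · intro x y hxy
        exact δ.trans' (δ.trans' (hgδ x.2) (haδ hxy)) (δ.symm' (hgδ y.2))
    · intro x y hxy
      have : rc (lift0 γ β).r (lift1 γ α).r x y := by rw [key]; exact hxy
      obtain ⟨c, hxc, hcy⟩ := this
      exact (lift0 γ β ⊔ lift1 γ α).trans'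
        (le_sup_left (b := lift1 γ α) hxc) (le_sup_right (a := lift0 γ β) hcy)
  exact ⟨by rw [hsup, key], hsup⟩
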